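/- Let ℓ : Fin N → ℝ (N ≥ 2) have a strict maximizer at j*: ℓ j* > ℓ j for all j ≠ j*. Define H(t) as the Shannon entropy of the softmax of ℓ + t·e_{j*}, where e_{j*} is the indicator of j*. Then H'(t) < 0 for all t ≥ 0; consequently for any Δ > 0, H(Δ) < H(0). -/

import Mathlib

noncomputable def smax (N : ℕ) (ℓ : Fin N → ℝ) (j : Fin N) : ℝ :=
  Real.exp (ℓ j) / ∑ k, Real.exp (ℓ k)

private lemma entropy_eq (N : ℕ) (ℓ : Fin N → ℝ) (jstar : Fin N) (s : ℝ) :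
    (-∑ j, smax N (fun i => ℓ i + if i = jstar then s else 0) j *
        Real.log (smax N (fun i => ℓ i + if i = jstar then s else 0) j)) =
    Real.log (Real.exp (ℓ jstar + s) + ∑ j ∈ ({jstar}ᶜ : Finset (Fin N)), Real.exp (ℓ j))
      - ((ℓ jstar + s) * Real.exp (ℓ jstar + s)
          + ∑ j ∈ ({jstar}ᶜ : Finset (Fin N)), ℓ j * Real.exp (ℓ j))
        / (Real.exp (ℓ jstar + s) + ∑ j ∈ ({jstar}ᶜ : Finset (Fin N)), Real.exp (ℓ j)) := by
  set u : Fin N → ℝ := fun i => ℓ i + if i = jstar then s else 0 with hu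
  set Z : ℝ := ∑ k, Real.exp (u k) with hZ
  have hZpos : 0 < Z := Finset.sum_pos (fun k _ => Real.exp_pos _) ⟨jstar, Finset.mem_univ _⟩
  have hZne : Z ≠ 0 := ne_of_gt hZpos
  have hsplit : ∀ f : ℝ → ℝ, ∑ k, f (u k) =
      f (ℓ jstar + s) + ∑ j ∈ ({jstar}ᶜ : Finset (Fin N)), f (ℓ j) := by
    intro f
    rw [← Finset.sum_compl_add_sum ({jstar} : Finset (Fin N)) (fun k => f (u k)),
      Finset.sum_singleton, add_comm]
    congr 1
    · simp [hu]
    · apply Finset.sum_congr rfl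
      intro j hj
      simp only [Finset.mem_compl, Finset.mem_singleton] at hj
      simp [hu, hj]
  have hZsplit : Z = Real.exp (ℓ jstar + s)
      + ∑ j ∈ ({jstar}ᶜ : Finset (Fin N)), Real.exp (ℓ j) := hsplit Real.exp
  have hsmax : ∀ j, smax N u j = Real.exp (u j) / Z := fun j => rfl
  have hterm : ∀ j, smax N u j * Real.log (smax N u j) =
      u j * Real.exp (u j) / Z - Real.exp (u j) * Real.log Z / Z := by
    intro j
    rw [hsmax, Real.log_div (Real.exp_ne_zero _) hZne, Real.log_exp]
    ring
  calc (-∑ j, smax N u j * Real.log (smax N u j))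
      = -((∑ j, u j * Real.exp (u j)) / Z - Z * Real.log Z / Z) := by
        rw [Finset.sum_congr rfl (fun j _ => hterm j), Finset.sum_sub_distrib,
          ← Finset.sum_div, ← Finset.sum_div, ← Finset.sum_mul, ← hZ]
    _ = Real.log Z - (∑ j, u j * Real.exp (u j)) / Z := by
        field_simp; ring
    _ = _ := by
        rw [hZsplit, hsplit (fun x => x * Real.exp x)]

private lemma hasDeriv_g (L S C t : ℝ) (hS : 0 < S) :
    HasDerivAt (fun s : ℝ => Real.log (Real.exp (L + s) + S)
        - ((L + s) * Real.exp (L + s) + C) / (Real.exp (L + s) + S))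
      (Real.exp (L + t) / (Real.exp (L + t) + S) ^ 2 * (C - (L + t) * S)) t := by
  have hZpos : 0 < Real.exp (L + t) + S := by positivity
  have hZne : Real.exp (L + t) + S ≠ 0 := ne_of_gt hZpos
  have hexp : HasDerivAt (fun s : ℝ => Real.exp (L + s)) (Real.exp (L + t)) t := by
    simpa using (((hasDerivAt_id t).const_add L).exp)
  have hid : HasDerivAt (fun s : ℝ => L + s) 1 t := (hasDerivAt_id t).const_add L
  have hlog : HasDerivAt (fun s : ℝ => Real.log (Real.exp (L + s) + S))
      (Real.exp (L + t) / (Real.exp (L + t) + S)) t := by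
    simpa using ((hexp.add_const S).log hZne)
  have hnum : HasDerivAt (fun s : ℝ => (L + s) * Real.exp (L + s) + C)
      (1 * Real.exp (L + t) + (L + t) * Real.exp (L + t)) t :=
    (hid.mul hexp).add_const C
  have hden : HasDerivAt (fun s : ℝ => Real.exp (L + s) + S) (Real.exp (L + t)) t :=
    hexp.add_const S
  have hdiv := hnum.div hden hZne
  have h := hlog.sub hdiv
  refine h.congr_deriv ?_
  field_simp
  ring

theorem boosting_argmax_decreases_entropy (N : ℕ) (hN : 2 ≤ N) (ℓ : Fin N → ℝ)
    (jstar : Fin N) (hmax : ∀ j, j ≠ jstar → ℓ j < ℓ jstar) :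
    (∀ t : ℝ, 0 ≤ t →
      deriv (fun s : ℝ =>
        -∑ j, smax N (fun i => ℓ i + if i = jstar then s else 0) j *
            Real.log (smax N (fun i => ℓ i + if i = jstar then s else 0) j)) t < 0) ∧
    ∀ Δ : ℝ, 0 < Δ →
      (-∑ j, smax N (fun i => ℓ i + if i = jstar then Δ else 0) j *
          Real.log (smax N (fun i => ℓ i + if i = jstar then Δ else 0) j)) <
      (-∑ j, smax N ℓ j * Real.log (smax N ℓ j)) := by
  set L : ℝ := ℓ jstar with hL
  set S : ℝ := ∑ j ∈ ({jstar}ᶜ : Finset (Fin N)), Real.exp (ℓ j) with hSdef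
  set C : ℝ := ∑ j ∈ ({jstar}ᶜ : Finset (Fin N)), ℓ j * Real.exp (ℓ j) with hCdef
  set g : ℝ → ℝ := fun s => Real.log (Real.exp (L + s) + S)
      - ((L + s) * Real.exp (L + s) + C) / (Real.exp (L + s) + S) with hg
  have hcne : ({jstar}ᶜ : Finset (Fin N)).Nonempty := by
    obtain ⟨j, hj⟩ := Fintype.exists_ne_of_one_lt_card (by simpa using (show 1 < N by omega)) jstar
    exact ⟨j, by simpa using hj⟩
  have hS : 0 < S := Finset.sum_pos (fun j _ => Real.exp_pos _) hcne
  have hfun : (fun s : ℝ =>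
      -∑ j, smax N (fun i => ℓ i + if i = jstar then s else 0) j *
          Real.log (smax N (fun i => ℓ i + if i = jstar then s else 0) j)) = g :=
    funext (fun s => entropy_eq N ℓ jstar s)
  have hCS : ∀ t : ℝ, 0 ≤ t → C - (L + t) * S < 0 := by
    intro t ht
    have : C < (L + t) * S := by
      rw [hCdef, hSdef, Finset.mul_sum]
      refine Finset.sum_lt_sum_of_nonempty hcne ?_
      intro j hj
      have hjne : j ≠ jstar := by simpa using hj
      have : ℓ j < L + t := lt_of_lt_of_le (hmax j hjne) (by linarith)
      exact mul_lt_mul_of_pos_right this (Real.exp_pos _)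
    linarith
  have hderiv : ∀ t : ℝ, 0 ≤ t → deriv g t < 0 := by
    intro t ht
    rw [(hasDeriv_g L S C t hS).deriv]
    exact mul_neg_of_pos_of_neg (by positivity) (hCS t ht)
  constructor
  · intro t ht
    rw [hfun]
    exact hderiv t ht
  · intro Δ hΔ
    have hanti : StrictAntiOn g (Set.Icc 0 Δ) := by
      refine strictAntiOn_of_deriv_neg (convex_Icc 0 Δ)
        (Differentiable.continuous (fun t => (hasDeriv_g L S C t hS).differentiableAt)).continuousOn ?_
      intro t ht
      rw [interior_Icc] at ht
      exact hderiv t (le_of_lt ht.1)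
    have h0 : (-∑ j, smax N ℓ j * Real.log (smax N ℓ j)) = g 0 := by
      rw [← hfun]
      simp
    have hD : (-∑ j, smax N (fun i => ℓ i + if i = jstar then Δ else 0) j *
        Real.log (smax N (fun i => ℓ i + if i = jstar then Δ else 0) j)) = g Δ := by
      rw [← hfun]
    rw [h0, hD]
    exact hanti (Set.left_mem_Icc.mpr hΔ.le) (Set.right_mem_Icc.mpr hΔ.le) hΔ
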